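/- Let ECC: F_q^d → F_q^v be an error-correcting code with relative distance at least 1−γ. Let Y, Y' be random variables over F_q^d (arbitrarily correlated) with prefixes Y₁ = Prefix(Y, d₁), Y'₁ = Prefix(Y', d₁), and suppose that whenever Y₁ = Y'₁ a common index I = I' is used, while I is ε-close in statistical distance (jointly with (Y,Y')) to uniform on {1,…,v} and independent of (Y, Y'). Define G = Y₁ ∘ ECC(Y)_I and G' = Y'₁ ∘ ECC(Y')_{I'}. If Pr[Y ≠ Y'] = 1, then Pr[G = G'] ≤ γ + √2·ε. -/

import Mathlib

open Matrix Kronecker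
open scoped Classical ComplexOrder

noncomputable section

abbrev Str (k : ℕ) := Fin k → Bool

def IsDensity {A : Type*} [Fintype A] (ρ : Matrix A A ℂ) : Prop :=
  ρ.PosSemidef ∧ ρ.trace = 1

def IsPure {A : Type*} (ρ : Matrix A A ℂ) : Prop :=
  ∃ v : A → ℂ, ρ = Matrix.vecMulVec v (star v)

/-- The square root of a positive semidefinite matrix, as `Matrix.PosSemidef.sqrt` was defined
in Mathlib (December 2024); that declaration has since been removed. -/
def psdSqrt {A : Type*} [Fintype A] [DecidableEq A] {M : Matrix A A ℂ} (hM : M.PosSemidef) :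
    Matrix A A ℂ :=
  (hM.1.eigenvectorUnitary : Matrix A A ℂ) *
    diagonal (fun i => ((Real.sqrt (hM.1.eigenvalues i) : ℝ) : ℂ)) *
    (star hM.1.eigenvectorUnitary : Matrix A A ℂ)

def traceNorm {A : Type*} [Fintype A] [DecidableEq A] (M : Matrix A A ℂ) : ℝ :=
  (psdSqrt (Matrix.posSemidef_conjTranspose_mul_self M)).trace.re

def msqrt {A : Type*} [Fintype A] [DecidableEq A] (M : Matrix A A ℂ) : Matrix A A ℂ :=
  if h : M.PosSemidef then psdSqrt h else 0

def fidelity {A : Type*} [Fintype A] [DecidableEq A] (ρ σ : Matrix A A ℂ) : ℝ :=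
  traceNorm (msqrt ρ * msqrt σ)

def Bures {A : Type*} [Fintype A] [DecidableEq A] (ρ σ : Matrix A A ℂ) : ℝ :=
  Real.sqrt (1 - fidelity ρ σ)

def mUniform (A : Type*) [Fintype A] [DecidableEq A] : Matrix A A ℂ :=
  ((Fintype.card A : ℂ))⁻¹ • (1 : Matrix A A ℂ)

def dmaxLE {A : Type*} [Fintype A] (ρ σ : Matrix A A ℂ) (c : ℝ) : Prop :=
  (((2:ℝ) ^ c) • σ - ρ).PosSemidef

def Dmax {A : Type*} [Fintype A] (ρ σ : Matrix A A ℂ) : ℝ :=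
  sInf {c : ℝ | dmaxLE ρ σ c}

def ptraceRight {A B : Type*} [Fintype A] [Fintype B]
    (ρ : Matrix (A × B) (A × B) ℂ) : Matrix A A ℂ :=
  Matrix.of fun a a' => ∑ b, ρ (a, b) (a', b)

def ptraceLeft {A B : Type*} [Fintype A] [Fintype B]
    (ρ : Matrix (A × B) (A × B) ℂ) : Matrix B B ℂ :=
  Matrix.of fun b b' => ∑ a, ρ (a, b) (a, b')

def condHmin {A B : Type*} [Fintype A] [Fintype B] [DecidableEq A] [DecidableEq B]
    (ρ : Matrix (A × B) (A × B) ℂ) : ℝ :=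
  sSup {x : ℝ | ∃ σ : Matrix B B ℂ, IsDensity σ ∧ x = - Dmax ρ ((1 : Matrix A A ℂ) ⊗ₖ σ)}

def condHminTilde {A B : Type*} [Fintype A] [Fintype B] [DecidableEq A] [DecidableEq B]
    (ρ : Matrix (A × B) (A × B) ℂ) : ℝ :=
  - Dmax ρ ((1 : Matrix A A ℂ) ⊗ₖ ptraceLeft ρ)

set_option maxHeartbeats 1000000

/-- **advice generator collision bound.** Let `ECC` have relative distance
`≥ 1 − γ`.  Let `(I, I', Y, Y')` be jointly distributed with `Pr[Y ≠ Y'] = 1`, with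
`I = I'` whenever the prefixes `Y₁, Y'₁` agree, and with `(I, Y, Y')` `ε`-close in
statistical distance to `U_{[v]} ⊗ (Y,Y')`.  Then the advices
`G = Y₁ ∘ ECC(Y)_I` and `G' = Y'₁ ∘ ECC(Y')_{I'}` collide with probability
at most `γ + √2·ε`. -/
theorem advice_collision (q d v d₁ : ℕ) (hv : 0 < v) (h1 : d₁ ≤ d)
    (γ ε : ℝ) (hγ : 0 ≤ γ) (hε : 0 ≤ ε)
    (ECC : (Fin d → Fin q) → Fin v → Fin q)
    (hdist : ∀ x y, x ≠ y →
      ((Finset.univ.filter (fun i => ECC x i = ECC y i)).card : ℝ) ≤ γ * v)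
    (p : Fin v → Fin v → (Fin d → Fin q) → (Fin d → Fin q) → ℝ)
    (hpos : ∀ i i' y y', 0 ≤ p i i' y y')
    (hsum : ∑ i, ∑ i', ∑ y, ∑ y', p i i' y y' = 1)
    (hneq : ∀ i i' y y', y = y' → p i i' y y' = 0)
    (hcommon : ∀ i i' y y',
      (fun j : Fin d₁ => y (Fin.castLE h1 j)) = (fun j : Fin d₁ => y' (Fin.castLE h1 j)) →
      i ≠ i' → p i i' y y' = 0)
    (hstat : (1/2) * (∑ i, ∑ y, ∑ y',
        |(∑ i', p i i' y y') - ((v:ℝ))⁻¹ * (∑ i₂, ∑ i', p i₂ i' y y')|) ≤ ε) :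
    (∑ i, ∑ i', ∑ y, ∑ y',
        if ((fun j : Fin d₁ => y (Fin.castLE h1 j)) = (fun j : Fin d₁ => y' (Fin.castLE h1 j))
            ∧ ECC y i = ECC y' i')
        then p i i' y y' else 0) ≤ γ + Real.sqrt 2 * ε := by
  classical
  have hv' : (0:ℝ) < v := by exact_mod_cast hv
  set pre : (Fin d → Fin q) → (Fin d₁ → Fin q) := fun y => fun j => y (Fin.castLE h1 j) with hpre
  have swap3 : ∀ (f : Fin v → (Fin d → Fin q) → (Fin d → Fin q) → ℝ),
      (∑ y, ∑ y', ∑ i, f i y y') = ∑ i, ∑ y, ∑ y', f i y y' := by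
    intro f
    calc ∑ y, ∑ y', ∑ i, f i y y' = ∑ y, ∑ i, ∑ y', f i y y' :=
          Finset.sum_congr rfl fun y _ => Finset.sum_comm
      _ = ∑ i, ∑ y, ∑ y', f i y y' := Finset.sum_comm
  set Q : Fin v → (Fin d → Fin q) → (Fin d → Fin q) → ℝ :=
    fun i y y' => ∑ i', p i i' y y' with hQdef
  set R : (Fin d → Fin q) → (Fin d → Fin q) → ℝ :=
    fun y y' => ∑ i₂, ∑ i', p i₂ i' y y' with hRdef
  have hQnn : ∀ i y y', 0 ≤ Q i y y' := fun i y y' =>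
    Finset.sum_nonneg fun _ _ => hpos _ _ _ _
  have hRnn : ∀ y y', 0 ≤ R y y' := fun y y' =>
    Finset.sum_nonneg fun _ _ => Finset.sum_nonneg fun _ _ => hpos _ _ _ _
  have hQsum : ∑ i, ∑ y, ∑ y', Q i y y' = 1 := by
    rw [← hsum]
    exact Finset.sum_congr rfl fun i _ => swap3 (fun i' y y' => p i i' y y')
  have hRsum : ∑ y, ∑ y', R y y' = 1 := by
    have h0 : (∑ y, ∑ y', R y y') = ∑ y, ∑ y', ∑ i, Q i y y' := rfl
    rw [h0, swap3, hQsum]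
  have hRneq : ∀ y y' : Fin d → Fin q, y = y' → R y y' = 0 := by
    intro y y' h
    simp only [hRdef]
    exact Finset.sum_eq_zero fun i _ => Finset.sum_eq_zero fun i' _ => hneq i i' y y' h
  -- Step 1 : bound by the diagonal i = i'
  have key1 : (∑ i, ∑ i', ∑ y, ∑ y',
        if (pre y = pre y' ∧ ECC y i = ECC y' i') then p i i' y y' else 0)
      ≤ ∑ i, ∑ y, ∑ y', if (pre y = pre y' ∧ ECC y i = ECC y' i) then Q i y y' else 0 := by
    refine Finset.sum_le_sum fun i _ => ?_
    have step1 : (∑ i', ∑ y, ∑ y',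
          if (pre y = pre y' ∧ ECC y i = ECC y' i') then p i i' y y' else 0)
        ≤ ∑ i', ∑ y, ∑ y',
          if (pre y = pre y' ∧ ECC y i = ECC y' i) then p i i' y y' else 0 := by
      refine Finset.sum_le_sum fun i' _ => Finset.sum_le_sum fun y _ =>
        Finset.sum_le_sum fun y' _ => ?_
      by_cases hc : pre y = pre y' ∧ ECC y i = ECC y' i'
      · by_cases hii : i = i'
        · subst hii; exact le_of_eq rfl
        · have hz : p i i' y y' = 0 := by
            refine hcommon i i' y y' ?_ hii
            simpa [hpre] using hc.1
          rw [if_pos hc, hz]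
          split <;> first | exact hpos _ _ _ _ | exact le_rfl
      · rw [if_neg hc]
        split <;> first | exact hpos _ _ _ _ | exact le_rfl
    refine step1.trans (le_of_eq ?_)
    rw [← swap3 (fun i' y y' =>
      if (pre y = pre y' ∧ ECC y i = ECC y' i) then p i i' y y' else 0)]
    refine Finset.sum_congr rfl fun y _ => Finset.sum_congr rfl fun y' _ => ?_
    by_cases hc : pre y = pre y' ∧ ECC y i = ECC y' i
    · simp [hc, hQdef]
    · simp [hc]
  -- Step 2 : split into deviation + uniform part
  have key2 : (∑ i, ∑ y, ∑ y', if (pre y = pre y' ∧ ECC y i = ECC y' i) then Q i y y' else 0)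
      ≤ (∑ i, ∑ y, ∑ y', max (Q i y y' - (v:ℝ)⁻¹ * R y y') 0)
        + ∑ i, ∑ y, ∑ y',
            if (pre y = pre y' ∧ ECC y i = ECC y' i) then (v:ℝ)⁻¹ * R y y' else 0 := by
    rw [← Finset.sum_add_distrib]
    refine Finset.sum_le_sum fun i _ => ?_
    rw [← Finset.sum_add_distrib]
    refine Finset.sum_le_sum fun y _ => ?_
    rw [← Finset.sum_add_distrib]
    refine Finset.sum_le_sum fun y' _ => ?_
    by_cases hc : pre y = pre y' ∧ ECC y i = ECC y' i
    · rw [if_pos hc, if_pos hc]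
      have := le_max_left (Q i y y' - (v:ℝ)⁻¹ * R y y') 0
      linarith
    · rw [if_neg hc, if_neg hc]
      have := le_max_right (Q i y y' - (v:ℝ)⁻¹ * R y y') 0
      linarith
  -- Step 3 : the deviation part is at most ε
  have hunif : ∀ i : Fin v, (∑ y, ∑ y', (v:ℝ)⁻¹ * R y y') = (v:ℝ)⁻¹ := by
    intro i
    simp only [← Finset.mul_sum]
    rw [hRsum, mul_one]
  have key3 : (∑ i, ∑ y, ∑ y', max (Q i y y' - (v:ℝ)⁻¹ * R y y') 0) ≤ ε := by
    have hmax : ∀ x : ℝ, max x 0 = x / 2 + |x| / 2 := by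
      intro x
      rcases le_total 0 x with h | h
      · rw [max_eq_left h, abs_of_nonneg h]; ring
      · rw [max_eq_right h, abs_of_nonpos h]; ring
    have hzero : (∑ i, ∑ y, ∑ y', (Q i y y' - (v:ℝ)⁻¹ * R y y')) = 0 := by
      simp only [Finset.sum_sub_distrib]
      rw [hQsum]
      have h2 : (∑ i : Fin v, ∑ y, ∑ y', (v:ℝ)⁻¹ * R y y') = 1 := by
        calc (∑ i : Fin v, ∑ y, ∑ y', (v:ℝ)⁻¹ * R y y')
            = ∑ _i : Fin v, (v:ℝ)⁻¹ := Finset.sum_congr rfl fun i _ => hunif i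
          _ = (v:ℝ) * (v:ℝ)⁻¹ := by
              rw [Finset.sum_const, Finset.card_univ, Fintype.card_fin, nsmul_eq_mul]
          _ = 1 := mul_inv_cancel₀ (ne_of_gt hv')
      rw [h2, sub_self]
    have hsplit : (∑ i, ∑ y, ∑ y', max (Q i y y' - (v:ℝ)⁻¹ * R y y') 0)
        = (∑ i, ∑ y, ∑ y', (Q i y y' - (v:ℝ)⁻¹ * R y y') / 2)
          + (∑ i, ∑ y, ∑ y', |Q i y y' - (v:ℝ)⁻¹ * R y y'| / 2) := by
      simp only [hmax, Finset.sum_add_distrib]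
    have hdiv1 : (∑ i, ∑ y, ∑ y', (Q i y y' - (v:ℝ)⁻¹ * R y y') / 2)
        = (∑ i, ∑ y, ∑ y', (Q i y y' - (v:ℝ)⁻¹ * R y y')) / 2 := by
      simp only [← Finset.sum_div]
    have hdiv2 : (∑ i, ∑ y, ∑ y', |Q i y y' - (v:ℝ)⁻¹ * R y y'| / 2)
        = (∑ i, ∑ y, ∑ y', |Q i y y' - (v:ℝ)⁻¹ * R y y'|) / 2 := by
      simp only [← Finset.sum_div]
    have hstat' : (1/2) * (∑ i, ∑ y, ∑ y', |Q i y y' - (v:ℝ)⁻¹ * R y y'|) ≤ ε := by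
      simpa [hQdef, hRdef] using hstat
    rw [hsplit, hdiv1, hdiv2, hzero]
    linarith
  -- Step 4 : the uniform part is at most γ
  have key4 : (∑ i, ∑ y, ∑ y',
        if (pre y = pre y' ∧ ECC y i = ECC y' i) then (v:ℝ)⁻¹ * R y y' else 0) ≤ γ := by
    rw [← swap3]
    have hterm : ∀ y y' : Fin d → Fin q,
        (∑ i, if (pre y = pre y' ∧ ECC y i = ECC y' i) then (v:ℝ)⁻¹ * R y y' else 0)
          ≤ γ * R y y' := by
      intro y y'
      by_cases hyy : y = y'
      · rw [hRneq y y' hyy]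
        simp
      · have h1' : (∑ i, if (pre y = pre y' ∧ ECC y i = ECC y' i)
              then (v:ℝ)⁻¹ * R y y' else 0)
            ≤ ∑ i, if (ECC y i = ECC y' i) then (v:ℝ)⁻¹ * R y y' else 0 := by
          refine Finset.sum_le_sum fun i _ => ?_
          by_cases hc : pre y = pre y' ∧ ECC y i = ECC y' i
          · rw [if_pos hc, if_pos hc.2]
          · rw [if_neg hc]
            split
            · exact mul_nonneg (by positivity) (hRnn y y')
            · exact le_rfl
        have h2' : (∑ i, if (ECC y i = ECC y' i) then (v:ℝ)⁻¹ * R y y' else 0)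
            = ((Finset.univ.filter (fun i => ECC y i = ECC y' i)).card : ℝ)
              * ((v:ℝ)⁻¹ * R y y') := by
          rw [← Finset.sum_filter, Finset.sum_const, nsmul_eq_mul]
        have h3' : ((Finset.univ.filter (fun i => ECC y i = ECC y' i)).card : ℝ)
              * ((v:ℝ)⁻¹ * R y y') ≤ (γ * v) * ((v:ℝ)⁻¹ * R y y') := by
          refine mul_le_mul_of_nonneg_right (hdist y y' hyy) ?_
          exact mul_nonneg (by positivity) (hRnn y y')
        have h4' : (γ * v) * ((v:ℝ)⁻¹ * R y y') = γ * R y y' := by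
          rw [show (γ * (v:ℝ)) * ((v:ℝ)⁻¹ * R y y')
              = γ * ((v:ℝ) * (v:ℝ)⁻¹) * R y y' from by ring,
            mul_inv_cancel₀ (ne_of_gt hv'), mul_one]
        calc (∑ i, if (pre y = pre y' ∧ ECC y i = ECC y' i)
                then (v:ℝ)⁻¹ * R y y' else 0)
            ≤ _ := h1'
          _ = _ := h2'
          _ ≤ _ := h3'
          _ = _ := h4'
    calc (∑ y, ∑ y', ∑ i, if (pre y = pre y' ∧ ECC y i = ECC y' i)
            then (v:ℝ)⁻¹ * R y y' else 0)
        ≤ ∑ y, ∑ y', γ * R y y' :=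
          Finset.sum_le_sum fun y _ => Finset.sum_le_sum fun y' _ => hterm y y'
      _ = γ * ∑ y, ∑ y', R y y' := by simp only [← Finset.mul_sum]
      _ = γ := by rw [hRsum, mul_one]
  have hsqrt2 : (1:ℝ) ≤ Real.sqrt 2 := by
    rw [show (1:ℝ) = Real.sqrt 1 from (Real.sqrt_one).symm]
    exact Real.sqrt_le_sqrt (by norm_num)
  have heps : ε ≤ Real.sqrt 2 * ε := by nlinarith
  have hmain : (∑ i, ∑ i', ∑ y, ∑ y',
        if (pre y = pre y' ∧ ECC y i = ECC y' i') then p i i' y y' else 0)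
      ≤ γ + Real.sqrt 2 * ε :=
    key1.trans (key2.trans (by linarith [add_le_add key3 key4]))
  simpa [hpre] using hmain
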